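/- Let R be a ring with a non-zero-divisor π such that R is π-adically complete and separated, p ∈ π^p R, and the Frobenius map R/π → R/π^p (x ↦ x^p) is an isomorphism. Then for any f ∈ R, the π-adic completion R⟨f⁻¹⟩ := lim_n (R/π^n)[f⁻¹] is again a ring in which π is a non-zero divisor, the ring is π-adically complete and separated, and the Frobenius map R⟨f⁻¹⟩/π → R⟨f⁻¹⟩/π^p is an isomorphism. -/

import Mathlib

set_option maxHeartbeats 1000000
set_option synthInstance.maxHeartbeats 200000

open AdicCompletion

section Aux

variable {S : Type} [CommRing S]

/-- Cancellation: `g^k * s ∈ (g^(k+n)) → s ∈ (g^n)`. -/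
lemma aux_cancel {g : S} (hg : g ∈ nonZeroDivisors S) (k n : ℕ) (s : S)
    (h : g ^ k * s ∈ Ideal.span {g ^ (k + n)}) :
    s ∈ Ideal.span {g ^ n} := by
  rw [Ideal.mem_span_singleton] at h ⊢
  obtain ⟨t, ht⟩ := h
  refine ⟨t, ?_⟩
  have hk : g ^ k ∈ nonZeroDivisors S := pow_mem hg k
  have := (mul_cancel_left_mem_nonZeroDivisors hk (x := s) (y := g ^ n * t)).mp
  apply this
  rw [ht, pow_add]; ring

lemma aux_span_pow (g : S) (n : ℕ) :
    ((Ideal.span {g}) ^ n • ⊤ : Ideal S) = Ideal.span {g ^ n} := by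
  have h : ((Ideal.span {g}) ^ n • ⊤ : Ideal S) = (Ideal.span {g}) ^ n := by ext x; simp
  rw [h, Ideal.span_singleton_pow]

/-- Key lemma: in the adic completion of `S` along a nonzerodivisor `g`,
the `n`-th component vanishes iff the element is divisible by `g^n`. -/
lemma aux_val_eq_zero_iff {g : S} (hg : g ∈ nonZeroDivisors S) (n : ℕ)
    (x : AdicCompletion (Ideal.span {g}) S) :
    x.val n = 0 ↔ x ∈ Ideal.span {(algebraMap S (AdicCompletion (Ideal.span {g}) S) g) ^ n} := by
  constructor
  · intro hx
    -- choose lifts of `x.val (n+m)` of the form `g^n * t`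
    have hlift : ∀ m : ℕ, ∃ t : S,
        Ideal.Quotient.mk ((Ideal.span {g} ^ (n + m) • ⊤ : Ideal S)) (g ^ n * t)
          = x.val (n + m) := by
      intro m
      obtain ⟨s, hs⟩ := Ideal.Quotient.mk_surjective (x.val (n + m))
      have h1 : transitionMap (Ideal.span {g}) S (Nat.le_add_right n m) (x.val (n + m)) =
          x.val n := x.2 _
      rw [← hs, transitionMap_ideal_mk, hx, Ideal.Quotient.eq_zero_iff_mem, aux_span_pow] at h1
      rw [Ideal.mem_span_singleton] at h1
      obtain ⟨t, ht⟩ := h1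
      exact ⟨t, by rw [← ht, hs]⟩
    choose t ht using hlift
    -- compatibility of the t's
    have hcompat : ∀ {m m' : ℕ} (hmm : m ≤ m'),
        transitionMap (Ideal.span {g}) S hmm
            (Ideal.Quotient.mk ((Ideal.span {g} ^ m' • ⊤ : Ideal S)) (t m')) =
          Ideal.Quotient.mk ((Ideal.span {g} ^ m • ⊤ : Ideal S)) (t m) := by
      intro m m' hmm
      rw [transitionMap_ideal_mk, Ideal.Quotient.eq, aux_span_pow]
      have h2 : transitionMap (Ideal.span {g}) S (by omega : n + m ≤ n + m')
          (x.val (n + m')) = x.val (n + m) := x.2 _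
      rw [← ht m', ← ht m, transitionMap_ideal_mk, Ideal.Quotient.eq, aux_span_pow] at h2
      have h5 : g ^ n * (t m' - t m) ∈ Ideal.span {g ^ (n + m)} := by
        have he : g ^ n * t m' - g ^ n * t m = g ^ n * (t m' - t m) := by ring
        rwa [he] at h2
      exact aux_cancel hg n m _ h5
    refine Ideal.mem_span_singleton.mpr
      ⟨⟨fun m => Ideal.Quotient.mk ((Ideal.span {g} ^ m • ⊤ : Ideal S)) (t m),
        fun {m m'} hmm => hcompat hmm⟩, ?_⟩
    ext m
    have h3 : transitionMap (Ideal.span {g}) S (Nat.le_add_left m n) (x.val (n + m)) =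
        x.val m := x.2 _
    rw [← ht m, transitionMap_ideal_mk] at h3
    rw [← h3]
    show Ideal.Quotient.mk _ (g ^ n * t m) =
      (Ideal.Quotient.mk ((Ideal.span {g} ^ m • ⊤ : Ideal S)) g) ^ n *
        Ideal.Quotient.mk _ (t m)
    rw [← map_pow, ← map_mul]
  · intro hx
    obtain ⟨y, hy⟩ := Ideal.mem_span_singleton.mp hx
    rw [hy]
    show (Ideal.Quotient.mk ((Ideal.span {g} ^ n • ⊤ : Ideal S)) g) ^ n * (y.val n) = 0
    rw [← map_pow, Ideal.Quotient.eq_zero_iff_mem.mpr, zero_mul]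
    rw [aux_span_pow]
    exact Ideal.subset_span rfl

end Aux


section Loc

variable {R : Type} [CommRing R] (π f : R)

lemma aux_frob_surj_loc (p : ℕ) (hp : 0 < p)
    (hFrobSurj : ∀ y : R, ∃ x : R, y - x ^ p ∈ Ideal.span {π ^ p}) :
    ∀ u : Localization.Away f, ∃ s : Localization.Away f,
      u - s ^ p ∈ Ideal.span {(algebraMap R (Localization.Away f) π) ^ p} := by
  intro u
  obtain ⟨n, a, ha⟩ := IsLocalization.Away.surj (S := Localization.Away f) f u
  have hunit : IsUnit (algebraMap R (Localization.Away f) f) :=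
    IsLocalization.map_units (M := Submonoid.powers f) (Localization.Away f)
      ⟨f, Submonoid.mem_powers f⟩
  obtain ⟨b, hb⟩ := hFrobSurj (a * f ^ (p * n - n))
  obtain ⟨c, hc⟩ := Ideal.mem_span_singleton.mp hb
  set v := hunit.unit with hvdef
  have hv : (v : Localization.Away f) = algebraMap R (Localization.Away f) f :=
    hunit.unit_spec
  have hinv : ∀ k : ℕ, ((↑v⁻¹ : Localization.Away f)) ^ k * (↑v : Localization.Away f) ^ k = 1 := by
    intro k; rw [← mul_pow, Units.inv_mul, one_pow]
  have hcancel : ∀ x y : Localization.Away f,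
      x * (↑v : Localization.Away f) ^ (p * n) = y * (↑v : Localization.Away f) ^ (p * n) →
        x = y := by
    intro x y h
    have h2 := congrArg (· * ((↑v⁻¹ : Localization.Away f)) ^ (p * n)) h
    simp only [mul_assoc] at h2
    rwa [← mul_pow, Units.mul_inv, one_pow, mul_one, mul_one] at h2
  refine ⟨algebraMap R _ b * ((↑v⁻¹ : Localization.Away f)) ^ n, ?_⟩
  rw [Ideal.mem_span_singleton]
  refine ⟨algebraMap R _ c * ((↑v⁻¹ : Localization.Away f)) ^ (p * n), ?_⟩
  apply hcancel
  have hnp : n ≤ p * n := Nat.le_mul_of_pos_left n hp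
  have h2 : u * (↑v : Localization.Away f) ^ (p * n) = algebraMap R _ (a * f ^ (p * n - n)) := by
    rw [hv, map_mul, map_pow, ← ha, mul_assoc, ← pow_add]
    congr 2
    omega
  have lhs : (u - (algebraMap R _ b * ((↑v⁻¹ : Localization.Away f)) ^ n) ^ p) *
      (↑v : Localization.Away f) ^ (p * n)
      = algebraMap R (Localization.Away f) (a * f ^ (p * n - n) - b ^ p) := by
    rw [map_sub, sub_mul, h2]
    congr 1
    rw [mul_pow, ← pow_mul, map_pow, mul_assoc, show n * p = p * n from mul_comm n p,
      hinv (p * n), mul_one]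
  have rhs : ((algebraMap R (Localization.Away f) π) ^ p *
        (algebraMap R _ c * ((↑v⁻¹ : Localization.Away f)) ^ (p * n))) *
      (↑v : Localization.Away f) ^ (p * n)
      = algebraMap R (Localization.Away f) (a * f ^ (p * n - n) - b ^ p) := by
    rw [mul_assoc, mul_assoc, hinv (p * n), mul_one, ← map_pow, ← map_mul, hc]
  rw [lhs, rhs]

lemma aux_frob_inj_loc (p : ℕ) (hp : 0 < p)
    (hFrobInj : ∀ x : R, x ^ p ∈ Ideal.span {π ^ p} → x ∈ Ideal.span {π}) :
    ∀ s : Localization.Away f, s ^ p ∈ Ideal.span {(algebraMap R (Localization.Away f) π) ^ p} →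
      s ∈ Ideal.span {algebraMap R (Localization.Away f) π} := by
  intro s hs
  obtain ⟨t, hts⟩ := Ideal.mem_span_singleton.mp hs
  obtain ⟨n, a, ha⟩ := IsLocalization.Away.surj (S := Localization.Away f) f s
  obtain ⟨l, b, hb⟩ := IsLocalization.Away.surj (S := Localization.Away f) f t
  have hunit : IsUnit (algebraMap R (Localization.Away f) f) :=
    IsLocalization.map_units (M := Submonoid.powers f) (Localization.Away f)
      ⟨f, Submonoid.mem_powers f⟩
  set v := hunit.unit with hvdef
  have hv : (v : Localization.Away f) = algebraMap R (Localization.Away f) f :=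
    hunit.unit_spec
  have hinv : ∀ k : ℕ, ((↑v⁻¹ : Localization.Away f)) ^ k * (↑v : Localization.Away f) ^ k = 1 := by
    intro k; rw [← mul_pow, Units.inv_mul, one_pow]
  -- the key identity in the localization
  have key : algebraMap R (Localization.Away f) (a ^ p * f ^ l)
      = algebraMap R (Localization.Away f) (π ^ p * (b * f ^ (p * n))) := by
    simp only [map_mul, map_pow]
    rw [← ha, ← hb, mul_pow, hts]
    ring
  obtain ⟨m, hm⟩ := IsLocalization.Away.exists_of_eq (S := Localization.Away f) (x := f) key
  -- a^p * f^(l+m) ∈ span {π^p}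
  have hmem : (a * f ^ (l + m)) ^ p ∈ Ideal.span {π ^ p} := by
    rw [Ideal.mem_span_singleton]
    refine ⟨b * f ^ (p * n) * f ^ m * f ^ (p * (l + m) - (l + m)), ?_⟩
    show _ = π ^ p * (b * f ^ (p * n) * f ^ m * f ^ (p * (l + m) - (l + m)))
    set k := p * (l + m) - (l + m) with hk
    have hexp : p * (l + m) = (l + m) + k := by
      have : l + m ≤ p * (l + m) := Nat.le_mul_of_pos_left _ hp
      omega
    calc (a * f ^ (l + m)) ^ p = a ^ p * f ^ ((l + m) * p) := by rw [mul_pow, ← pow_mul]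
      _ = a ^ p * f ^ (l + m + k) := by rw [mul_comm (l + m) p, hexp]
      _ = (f ^ m * (a ^ p * f ^ l)) * f ^ k := by
          rw [pow_add, pow_add]; ring
      _ = (f ^ m * (π ^ p * (b * f ^ (p * n)))) * f ^ k := by rw [hm]
      _ = π ^ p * (b * f ^ (p * n) * f ^ m * f ^ (p * (l + m) - (l + m))) := by rw [← hk]; ring
  obtain ⟨c, hcc⟩ := Ideal.mem_span_singleton.mp (hFrobInj _ hmem)
  -- s * f'^(n + (l+m)) = π' * c'
  rw [Ideal.mem_span_singleton]
  refine ⟨algebraMap R _ c * ((↑v⁻¹ : Localization.Away f)) ^ (n + (l + m)), ?_⟩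
  have hcancel : ∀ x y : Localization.Away f,
      x * (↑v : Localization.Away f) ^ (n + (l + m)) =
        y * (↑v : Localization.Away f) ^ (n + (l + m)) → x = y := by
    intro x y h
    have h2 := congrArg (· * ((↑v⁻¹ : Localization.Away f)) ^ (n + (l + m))) h
    simp only [mul_assoc] at h2
    rwa [← mul_pow, Units.mul_inv, one_pow, mul_one, mul_one] at h2
  apply hcancel
  have lhs : s * (↑v : Localization.Away f) ^ (n + (l + m))
      = algebraMap R (Localization.Away f) (a * f ^ (l + m)) := by
    rw [hv, map_mul, map_pow, ← ha, pow_add]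
    ring
  rw [lhs, hcc, map_mul]
  rw [mul_assoc, mul_assoc, hinv (n + (l + m)), mul_one]

end Loc




/-!
STATEMENT 0: If `R` is an integral perfectoid ring (π a non-zero-divisor, R π-adically
complete and separated, p ∈ π^p R, Frobenius R/π → R/π^p bijective), then for any `f : R`
the π-adic completion `R⟨f⁻¹⟩` of the localization `R[f⁻¹]` is again such a ring:
π is a non-zero divisor, the ring is π-adically complete and separated, and
Frobenius `R⟨f⁻¹⟩/π → R⟨f⁻¹⟩/π^p` is an isomorphism.
-/

open scoped Classical

theorem integral_perfectoid_completed_localization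
    (p : ℕ) (hp : p.Prime)
    (R : Type) [CommRing R] (π : R)
    (hπ : π ∈ nonZeroDivisors R)
    (hcomplete : IsAdicComplete (Ideal.span {π}) R)
    (hpdiv : (p : R) ∈ Ideal.span {π ^ p})
    (hFrobSurj : ∀ y : R, ∃ x : R, y - x ^ p ∈ Ideal.span {π ^ p})
    (hFrobInj : ∀ x : R, x ^ p ∈ Ideal.span {π ^ p} → x ∈ Ideal.span {π})
    (f : R) :
    -- the completed localization `R⟨f⁻¹⟩ = lim_n (R/π^n)[f⁻¹]`
    let S := Localization.Away f
    let π' : S := algebraMap R S π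
    let C := AdicCompletion (Ideal.span {π'}) S
    let π'' : C := algebraMap S C π'
    -- π is a non-zero divisor in `R⟨f⁻¹⟩`
    π'' ∈ nonZeroDivisors C ∧
    -- `R⟨f⁻¹⟩` is π-adically complete and separated
    IsAdicComplete (Ideal.span {π''}) C ∧
    -- Frobenius `R⟨f⁻¹⟩/π → R⟨f⁻¹⟩/π^p` is surjective …
    (∀ y : C, ∃ x : C, y - x ^ p ∈ Ideal.span {π'' ^ p}) ∧
    -- … and injective
    (∀ x : C, x ^ p ∈ Ideal.span {π'' ^ p} → x ∈ Ideal.span {π''}) := by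
  intro S π' C π''
  -- π' is a nonzerodivisor in the localization
  have hπ' : π' ∈ nonZeroDivisors S := by
    have h := IsLocalization.nonZeroDivisors_le_comap (M := Submonoid.powers f) (S := S) hπ
    exact h
  have hspanC : ∀ n : ℕ, ((Ideal.span {π''}) ^ n • ⊤ : Ideal C) = Ideal.span {π'' ^ n} :=
    fun n => aux_span_pow π'' n
  refine ⟨?_, ?_, ?_, ?_⟩
  · -- π'' is a nonzerodivisor
    rw [mem_nonZeroDivisors_iff_right]
    intro x hx
    ext n
    show x.val n = 0
    obtain ⟨s, hs⟩ := Ideal.Quotient.mk_surjective (x.val (n + 1))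
    have h1 : (x * π'').val (n + 1) = 0 := by rw [hx]; rfl
    have h2 : s * π' ∈ Ideal.span {π' ^ (n + 1)} := by
      have h3 : (Ideal.Quotient.mk ((Ideal.span {π'} ^ (n + 1) • ⊤ : Ideal S))) (s * π') = 0 := by
        rw [map_mul, hs]
        exact h1
      rwa [Ideal.Quotient.eq_zero_iff_mem, aux_span_pow] at h3
    have h3 : s ∈ Ideal.span {π' ^ n} := by
      apply aux_cancel hπ' 1 n s
      rw [pow_one, Nat.add_comm 1 n, mul_comm]
      exact h2
    have h4 := x.2 (Nat.le_succ n)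
    rw [← hs, AdicCompletion.transitionMap_ideal_mk] at h4
    rw [← h4, Ideal.Quotient.eq_zero_iff_mem, aux_span_pow]
    exact h3
  · -- completeness
    have hH : IsHausdorff (Ideal.span {π''}) C := by
      refine ⟨fun x hx => ?_⟩
      ext n
      show x.val n = 0
      have h := SModEq.zero.mp (hx n)
      rw [hspanC n] at h
      exact (aux_val_eq_zero_iff hπ' n x).mpr h
    have hP : IsPrecomplete (Ideal.span {π''}) C := by
      refine ⟨fun seq hseq => ?_⟩
      have hdiff : ∀ {m n : ℕ}, m ≤ n → (seq n).val m = (seq m).val m := by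
        intro m n hmn
        have h := SModEq.sub_mem.mp (hseq hmn)
        rw [hspanC m] at h
        have h2 := (aux_val_eq_zero_iff hπ' m _).mpr h
        rw [AdicCompletion.val_sub] at h2
        exact (sub_eq_zero.mp h2).symm
      refine ⟨⟨fun m => (seq m).val m, ?_⟩, ?_⟩
      · intro m n hmn
        rw [(seq n).2 hmn]
        exact hdiff hmn
      · intro n
        apply SModEq.sub_mem.mpr
        rw [hspanC n]
        apply (aux_val_eq_zero_iff hπ' n _).mp
        show (seq n).val n - (seq n).val n = 0
        exact sub_self _
    exact @IsAdicComplete.mk _ _ _ _ _ _ hH hP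
  · -- Frobenius surjectivity
    intro y
    obtain ⟨u, hu⟩ := Ideal.Quotient.mk_surjective (y.val p)
    obtain ⟨s, hsy⟩ := aux_frob_surj_loc π f p hp.pos hFrobSurj u
    refine ⟨algebraMap S C s, ?_⟩
    have hval : (y - (algebraMap S C s) ^ p).val p = 0 := by
      rw [AdicCompletion.val_sub]
      show y.val p - (Ideal.Quotient.mk ((Ideal.span {π'} ^ p • ⊤ : Ideal S)) s) ^ p = 0
      rw [← map_pow, ← hu, sub_eq_zero, Ideal.Quotient.eq, aux_span_pow]
      exact hsy
    exact (aux_val_eq_zero_iff hπ' p _).mp hval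
  · -- Frobenius injectivity
    intro x hx
    have h0 : (x ^ p).val p = 0 := (aux_val_eq_zero_iff hπ' p _).mpr hx
    obtain ⟨s, hs⟩ := Ideal.Quotient.mk_surjective (x.val p)
    have h1 : s ^ p ∈ Ideal.span {π' ^ p} := by
      rw [← aux_span_pow, ← Ideal.Quotient.eq_zero_iff_mem, map_pow, hs]
      exact h0
    have h2 := aux_frob_inj_loc π f p hp.pos hFrobInj s h1
    have h3 : x.val 1 = 0 := by
      have h4 := x.2 (Nat.one_le_iff_ne_zero.mpr hp.pos.ne')
      rw [← hs, AdicCompletion.transitionMap_ideal_mk] at h4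
      rw [← h4, Ideal.Quotient.eq_zero_iff_mem, aux_span_pow, pow_one]
      exact h2
    have h5 := (aux_val_eq_zero_iff hπ' 1 x).mp h3
    rwa [pow_one] at h5
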